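/- If H is a subgraph of LeTQ(s,t) (s,t >= 1) with minimum degree at least g, then H has at least 2^g vertices. -/

import Mathlib

/-- Flip bit `k` of the binary string `x`. -/
def bflip {n : ℕ} (x : Fin n → Bool) (k : Fin n) : Fin n → Bool :=
  Function.update x k (!(x k))

/-- Locally twisted cube adjacency on `n`-bit binary strings:
either flip bit `k` for some `k ≤ 1`; or, for some `k ≥ 2`, flip bits `k` and `k-1`
when bit 0 is `1`, resp. flip only bit `k` when bit 0 is `0`. -/
def cubeAdj (n : ℕ) (x y : Fin n → Bool) : Prop :=
  (∃ k : Fin n, (k : ℕ) ≤ 1 ∧ y = bflip x k) ∨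
  (∃ k : Fin n, 2 ≤ (k : ℕ) ∧
    ((∃ h0 : 0 < n, x ⟨0, h0⟩ = true ∧
        y = bflip (bflip x k) ⟨(k : ℕ) - 1, lt_of_le_of_lt (Nat.sub_le _ _) k.isLt⟩) ∨
     (∃ h0 : 0 < n, x ⟨0, h0⟩ = false ∧ y = bflip x k)))

/-- The locally twisted cube `LTQ_n`. -/
def LTQ (n : ℕ) : SimpleGraph (Fin n → Bool) where
  Adj x y := x ≠ y ∧ (cubeAdj n x y ∨ cubeAdj n y x)
  symm := ⟨fun _ _ h => ⟨h.1.symm, h.2.symm⟩⟩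
  loopless := ⟨fun _ h => h.1 rfl⟩

/-- A vertex of `LeTQ(s,t)`: the `a`-bits, the `b`-bits and the bit `c`. -/
abbrev LeTQVert (s t : ℕ) := (Fin s → Bool) × (Fin t → Bool) × Bool

/-- One-sided adjacency condition of the locally exchanged twisted cube. -/
def LeTQAdjOne (s t : ℕ) (u v : LeTQVert s t) : Prop :=
  (u.1 = v.1 ∧ u.2.1 = v.2.1 ∧ u.2.2 = !v.2.2) ∨
  (u.2.2 = true ∧ v.2.2 = true ∧ u.1 = v.1 ∧ cubeAdj t u.2.1 v.2.1) ∨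
  (u.2.2 = false ∧ v.2.2 = false ∧ u.2.1 = v.2.1 ∧ cubeAdj s u.1 v.1)

/-- The locally exchanged twisted cube `LeTQ(s,t)`. -/
def LeTQ (s t : ℕ) : SimpleGraph (LeTQVert s t) where
  Adj u v := u ≠ v ∧ (LeTQAdjOne s t u v ∨ LeTQAdjOne s t v u)
  symm := ⟨fun _ _ h => ⟨h.1.symm, h.2.symm⟩⟩
  loopless := ⟨fun _ h => h.1 rfl⟩

lemma bflip_apply {n : ℕ} (x : Fin n → Bool) (k j : Fin n) :
    bflip x k j = if j = k then !(x k) else x j := Function.update_apply x k (!(x k)) j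

/-- canonical neighbor at direction k -/
def cnbr {n : ℕ} (x : Fin n → Bool) (k : Fin n) : Fin n → Bool :=
  if 2 ≤ (k : ℕ) ∧ x ⟨0, Nat.lt_of_le_of_lt (Nat.zero_le _) k.isLt⟩ = true then
    bflip (bflip x k) ⟨(k : ℕ) - 1, lt_of_le_of_lt (Nat.sub_le _ _) k.isLt⟩
  else bflip x k

lemma cubeAdj_iff {n : ℕ} (x y : Fin n → Bool) :
    cubeAdj n x y ↔ ∃ k : Fin n, y = cnbr x k := by
  constructor
  · rintro (⟨k, hk, rfl⟩ | ⟨k, hk, ⟨h0, hx0, rfl⟩ | ⟨h0, hx0, rfl⟩⟩)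
    · exact ⟨k, by rw [cnbr, if_neg (fun hc => absurd hc.1 (by omega))]⟩
    · exact ⟨k, by rw [cnbr, if_pos ⟨hk, hx0⟩]⟩
    · exact ⟨k, by rw [cnbr, if_neg (fun h => by rw [hx0] at h; exact Bool.false_ne_true h.2)]⟩
  · rintro ⟨k, rfl⟩
    by_cases h : 2 ≤ (k : ℕ) ∧ x ⟨0, Nat.lt_of_le_of_lt (Nat.zero_le _) k.isLt⟩ = true
    · exact Or.inr ⟨k, h.1, Or.inl ⟨_, h.2, by rw [cnbr, if_pos h]⟩⟩
    · by_cases hk : (k : ℕ) ≤ 1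
      · exact Or.inl ⟨k, hk, by rw [cnbr, if_neg h]⟩
      · have h2 : 2 ≤ (k : ℕ) := by omega
        have hx0 : x ⟨0, Nat.lt_of_le_of_lt (Nat.zero_le _) k.isLt⟩ = false := by
          rcases Bool.eq_false_or_eq_true (x ⟨0, Nat.lt_of_le_of_lt (Nat.zero_le _) k.isLt⟩) with htv | hf
          · exact absurd ⟨h2, htv⟩ h
          · exact hf
        exact Or.inr ⟨k, h2, Or.inr ⟨_, hx0, by rw [cnbr, if_neg h]⟩⟩

lemma cnbr_apply_self {n : ℕ} (x : Fin n → Bool) (k : Fin n) :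
    cnbr x k k = !(x k) := by
  rw [cnbr]
  split_ifs with h
  · rw [bflip_apply, if_neg, bflip_apply, if_pos rfl]
    intro hk
    have := congrArg Fin.val hk
    simp at this
    omega
  · rw [bflip_apply, if_pos rfl]

lemma cnbr_apply_gt {n : ℕ} (x : Fin n → Bool) (k j : Fin n) (hj : (k : ℕ) < (j : ℕ)) :
    cnbr x k j = x j := by
  have h1 : j ≠ k := fun h => by subst h; omega
  rw [cnbr]
  split_ifs with h
  · rw [bflip_apply, if_neg, bflip_apply, if_neg h1]
    intro hk
    have := congrArg Fin.val hk
    simp at this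
    omega
  · rw [bflip_apply, if_neg h1]

lemma bflip_bflip {n : ℕ} (x : Fin n → Bool) (k : Fin n) : bflip (bflip x k) k = x := by
  funext j
  rw [bflip_apply, bflip_apply, bflip_apply]
  by_cases h : j = k <;> simp [h]

lemma cnbr_cnbr {n : ℕ} (x : Fin n → Bool) (k : Fin n) : cnbr (cnbr x k) k = x := by
  by_cases h2 : 2 ≤ (k : ℕ)
  · have h0lt : (0:ℕ) < n := Nat.lt_of_le_of_lt (Nat.zero_le _) k.isLt
    have hz : cnbr x k ⟨0, h0lt⟩ = x ⟨0, h0lt⟩ := by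
      rw [cnbr]
      split_ifs with h
      · rw [bflip_apply, if_neg, bflip_apply, if_neg]
        · intro hk; have := congrArg Fin.val hk; simp at this; omega
        · intro hk; have := congrArg Fin.val hk; simp at this; omega
      · rw [bflip_apply, if_neg]
        intro hk; have := congrArg Fin.val hk; simp at this; omega
    by_cases hx0 : x ⟨0, h0lt⟩ = true
    · rw [cnbr, if_pos ⟨h2, by rw [hz]; exact hx0⟩, cnbr, if_pos ⟨h2, hx0⟩]
      funext j
      simp only [bflip_apply]
      have hne : (⟨(k:ℕ)-1, lt_of_le_of_lt (Nat.sub_le _ _) k.isLt⟩ : Fin n) ≠ k := by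
        intro hk; have := congrArg Fin.val hk; simp at this; omega
      by_cases hjk : j = k <;> by_cases hjm : j = (⟨(k:ℕ)-1, lt_of_le_of_lt (Nat.sub_le _ _) k.isLt⟩ : Fin n) <;>
        simp [hjk, hjm, hne, Ne.symm hne]
    · have hx0' : x ⟨0, h0lt⟩ = false := by
        rcases Bool.eq_false_or_eq_true (x ⟨0, h0lt⟩) with htv | hf
        · exact absurd htv hx0
        · exact hf
      rw [cnbr, if_neg (by rw [hz]; exact fun h => hx0 h.2), cnbr,
        if_neg (fun h => hx0 h.2)]
      exact bflip_bflip x k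
  · rw [cnbr, if_neg (fun h => h2 h.1), cnbr, if_neg (fun h => h2 h.1)]
    exact bflip_bflip x k

lemma cubeAdj_symm {n : ℕ} {x y : Fin n → Bool} (h : cubeAdj n x y) : cubeAdj n y x := by
  rw [cubeAdj_iff] at h ⊢
  obtain ⟨k, rfl⟩ := h
  exact ⟨k, (cnbr_cnbr x k).symm⟩

lemma one_symm {s t : ℕ} {u v : LeTQVert s t} (h : LeTQAdjOne s t v u) :
    LeTQAdjOne s t u v := by
  rcases h with ⟨h1, h2, h3⟩ | ⟨h1, h2, h3, h4⟩ | ⟨h1, h2, h3, h4⟩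
  · exact Or.inl ⟨h1.symm, h2.symm, by rw [h3]; simp⟩
  · exact Or.inr (Or.inl ⟨h2, h1, h3.symm, cubeAdj_symm h4⟩)
  · exact Or.inr (Or.inr ⟨h2, h1, h3.symm, cubeAdj_symm h4⟩)

lemma adj_one {s t : ℕ} {u v : LeTQVert s t} (h : (LeTQ s t).Adj u v) :
    LeTQAdjOne s t u v := by
  rcases h.2 with h1 | h1
  · exact h1
  · exact one_symm h1

/-- description of neighbors -/
lemma one_desc {s t : ℕ} {u v : LeTQVert s t} (h : LeTQAdjOne s t u v) :
    (v = (u.1, u.2.1, !u.2.2)) ∨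
    (∃ k : Fin t, u.2.2 = true ∧ v = (u.1, cnbr u.2.1 k, true)) ∨
    (∃ k : Fin s, u.2.2 = false ∧ v = (cnbr u.1 k, u.2.1, false)) := by
  rcases h with ⟨h1, h2, h3⟩ | ⟨h1, h2, h3, h4⟩ | ⟨h1, h2, h3, h4⟩
  · left
    have : v.2.2 = !u.2.2 := by rw [h3]; simp
    exact Prod.ext h1.symm (Prod.ext h2.symm this)
  · right; left
    obtain ⟨k, hk⟩ := (cubeAdj_iff _ _).1 h4
    exact ⟨k, h1, Prod.ext h3.symm (Prod.ext hk h2)⟩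
  · right; right
    obtain ⟨k, hk⟩ := (cubeAdj_iff _ _).1 h4
    exact ⟨k, h1, Prod.ext hk (Prod.ext h3.symm h2)⟩

/-- the encoding of a vertex as an infinite bit string -/
def ecode {s t : ℕ} (u : LeTQVert s t) : ℕ → Bool := fun j =>
  if h : j < t then u.2.1 ⟨j, h⟩
  else if h2 : j - t < s then u.1 ⟨j - t, h2⟩
  else if j = s + t then u.2.2 else false

lemma ecode_b {s t : ℕ} (u : LeTQVert s t) (j : ℕ) (hj : j < t) :
    ecode u j = u.2.1 ⟨j, hj⟩ := by rw [ecode]; rw [dif_pos hj]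

lemma ecode_a {s t : ℕ} (u : LeTQVert s t) (j : ℕ) (hj1 : t ≤ j) (hj2 : j - t < s) :
    ecode u j = u.1 ⟨j - t, hj2⟩ := by
  rw [ecode, dif_neg (by omega), dif_pos hj2]

lemma ecode_c {s t : ℕ} (u : LeTQVert s t) :
    ecode u (s + t) = u.2.2 := by
  rw [ecode, dif_neg (by omega), dif_neg (by omega), if_pos rfl]

lemma ecode_high {s t : ℕ} (u : LeTQVert s t) (j : ℕ) (hj : s + t < j) :
    ecode u j = false := by
  rw [ecode, dif_neg (by omega), dif_neg (by omega), if_neg (by omega)]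

/-- top differing coordinate -/
def TDiff (f g : ℕ → Bool) (k : ℕ) : Prop :=
  f k ≠ g k ∧ ∀ j, k < j → f j = g j

lemma TDiff_unique {f g : ℕ → Bool} {k k' : ℕ} (h : TDiff f g k) (h' : TDiff f g k') :
    k = k' := by
  rcases lt_trichotomy k k' with hlt | he | hgt
  · exact absurd (h.2 k' hlt) h'.1
  · exact he
  · exact absurd (h'.2 k hgt) h.1

lemma tdiff_flip {s t : ℕ} (u : LeTQVert s t) :
    TDiff (ecode u) (ecode (u.1, u.2.1, !u.2.2)) (s + t) := by
  constructor
  · rw [ecode_c, ecode_c]; simp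
  · intro j hj; rw [ecode_high _ _ hj, ecode_high _ _ hj]

lemma tdiff_b {s t : ℕ} (u : LeTQVert s t) (hc : u.2.2 = true) (k : Fin t) :
    TDiff (ecode u) (ecode (u.1, cnbr u.2.1 k, true)) (k : ℕ) := by
  constructor
  · rw [ecode_b _ _ k.isLt, ecode_b _ _ k.isLt]
    show u.2.1 ⟨(k:ℕ), k.isLt⟩ ≠ cnbr u.2.1 k ⟨(k:ℕ), k.isLt⟩
    have : (⟨(k:ℕ), k.isLt⟩ : Fin t) = k := rfl
    rw [this, cnbr_apply_self]
    simp
  · intro j hj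
    by_cases h1 : j < t
    · rw [ecode_b _ _ h1, ecode_b _ _ h1]
      show u.2.1 ⟨j, h1⟩ = cnbr u.2.1 k ⟨j, h1⟩
      exact (cnbr_apply_gt _ _ _ hj).symm
    · by_cases h2 : j - t < s
      · rw [ecode_a _ _ (by omega) h2, ecode_a _ _ (by omega) h2]
      · by_cases h3 : j = s + t
        · subst h3; rw [ecode_c, ecode_c, hc]
        · rw [ecode_high _ _ (by omega), ecode_high _ _ (by omega)]

lemma tdiff_a {s t : ℕ} (u : LeTQVert s t) (hc : u.2.2 = false) (k : Fin s) :
    TDiff (ecode u) (ecode (cnbr u.1 k, u.2.1, false)) (t + (k : ℕ)) := by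
  have hlt : t + (k : ℕ) - t < s := by have := k.isLt; omega
  constructor
  · rw [ecode_a _ _ (by omega) hlt, ecode_a _ _ (by omega) hlt]
    show u.1 ⟨t + (k:ℕ) - t, hlt⟩ ≠ cnbr u.1 k ⟨t + (k:ℕ) - t, hlt⟩
    have : (⟨t + (k:ℕ) - t, hlt⟩ : Fin s) = k := by
      apply Fin.ext; simp
    rw [this, cnbr_apply_self]
    simp
  · intro j hj
    by_cases h1 : j < t
    · omega
    · by_cases h2 : j - t < s
      · rw [ecode_a _ _ (by omega) h2, ecode_a _ _ (by omega) h2]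
        show u.1 ⟨j - t, h2⟩ = cnbr u.1 k ⟨j - t, h2⟩
        exact (cnbr_apply_gt _ _ _ (by simp; omega)).symm
      · by_cases h3 : j = s + t
        · subst h3; rw [ecode_c, ecode_c, hc]
        · rw [ecode_high _ _ (by omega), ecode_high _ _ (by omega)]

/-- every edge has a top differing coordinate which determines the neighbor -/
lemma adj_struct {s t : ℕ} {u v : LeTQVert s t} (h : (LeTQ s t).Adj u v) :
    ∃ k, TDiff (ecode u) (ecode v) k ∧
      ∀ w, (LeTQ s t).Adj u w → TDiff (ecode u) (ecode w) k → w = v := by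
  have hd := one_desc (adj_one h)
  rcases hd with hv | ⟨kv, hc, hv⟩ | ⟨kv, hc, hv⟩
  · refine ⟨s + t, by rw [hv]; exact tdiff_flip u, ?_⟩
    intro w hw htw
    rcases one_desc (adj_one hw) with hwd | ⟨kw, hcw, hwd⟩ | ⟨kw, hcw, hwd⟩
    · rw [hwd, hv]
    · have h2 : TDiff (ecode u) (ecode w) (kw : ℕ) := by rw [hwd]; exact tdiff_b u hcw kw
      have := TDiff_unique htw h2
      have := kw.isLt
      omega
    · have h2 : TDiff (ecode u) (ecode w) (t + (kw : ℕ)) := by rw [hwd]; exact tdiff_a u hcw kw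
      have := TDiff_unique htw h2
      have := kw.isLt
      omega
  · refine ⟨(kv : ℕ), by rw [hv]; exact tdiff_b u hc kv, ?_⟩
    intro w hw htw
    rcases one_desc (adj_one hw) with hwd | ⟨kw, hcw, hwd⟩ | ⟨kw, hcw, hwd⟩
    · have h2 : TDiff (ecode u) (ecode w) (s + t) := by rw [hwd]; exact tdiff_flip u
      have := TDiff_unique htw h2
      have := kv.isLt
      omega
    · have h2 : TDiff (ecode u) (ecode w) (kw : ℕ) := by rw [hwd]; exact tdiff_b u hcw kw
      have hk : (kv : ℕ) = (kw : ℕ) := TDiff_unique htw h2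
      have : kv = kw := Fin.ext hk
      rw [hwd, hv, this]
    · rw [hcw] at hc; exact absurd hc (by simp)
  · refine ⟨t + (kv : ℕ), by rw [hv]; exact tdiff_a u hc kv, ?_⟩
    intro w hw htw
    rcases one_desc (adj_one hw) with hwd | ⟨kw, hcw, hwd⟩ | ⟨kw, hcw, hwd⟩
    · have h2 : TDiff (ecode u) (ecode w) (s + t) := by rw [hwd]; exact tdiff_flip u
      have := TDiff_unique htw h2
      have := kv.isLt
      omega
    · rw [hcw] at hc; exact absurd hc (by simp)
    · have h2 : TDiff (ecode u) (ecode w) (t + (kw : ℕ)) := by rw [hwd]; exact tdiff_a u hcw kw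
      have hk : t + (kv : ℕ) = t + (kw : ℕ) := TDiff_unique htw h2
      have : kv = kw := Fin.ext (by omega)
      rw [hwd, hv, this]

/-- Abstract lemma: a graph whose edges are determined by top differing coordinates
of a binary encoding; min degree g forces at least 2^g vertices. -/
theorem abstract_bound {V : Type*} [Finite V] (G : SimpleGraph V) (code : V → ℕ → Bool)
    (Hstr : ∀ u v, G.Adj u v → ∃ k, TDiff (code u) (code v) k ∧
      ∀ w, G.Adj u w → TDiff (code u) (code w) k → w = v) :
    ∀ m g (S : Set V), S.Nonempty →
      (∀ x ∈ S, g ≤ (G.neighborSet x ∩ S).ncard) →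
      (∀ x ∈ S, ∀ y ∈ S, G.Adj x y → ∀ j, m ≤ j → code x j = code y j) →
      2 ^ g ≤ S.ncard := by
  intro m
  induction m with
  | zero =>
    intro g S hne hdeg hagr
    have hg0 : g = 0 := by
      obtain ⟨x, hx⟩ := hne
      have hempty : G.neighborSet x ∩ S = ∅ := by
        ext y
        simp only [Set.mem_inter_iff, SimpleGraph.mem_neighborSet, Set.mem_empty_iff_false,
          iff_false, not_and]
        intro hadj hyS
        obtain ⟨k, hk, _⟩ := Hstr x y hadj
        exact hk.1 (hagr x hx y hyS hadj k (Nat.zero_le k))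
      have := hdeg x hx
      rw [hempty] at this
      simpa using this
    subst hg0
    exact (Set.ncard_pos (Set.toFinite S)).2 hne
  | succ m ih =>
    intro g S hne hdeg hagr
    by_cases hall : ∀ x ∈ S, ∀ y ∈ S, G.Adj x y → code x m = code y m
    · exact ih g S hne hdeg (fun x hx y hy hadj j hj => by
        rcases Nat.eq_or_lt_of_le hj with he | hlt
        · rw [← he]; exact hall x hx y hy hadj
        · exact hagr x hx y hy hadj j hlt)
    · -- both halves are nonempty
      push_neg at hall
      obtain ⟨x0, hx0, y0, hy0, hadj0, hne0⟩ := hall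
      -- define the two halves
      set St : Set V := {x ∈ S | code x m = true} with hSt
      set Sf : Set V := {x ∈ S | code x m = false} with hSf
      have hmem : ∀ x ∈ S, (x ∈ St ∨ x ∈ Sf) := by
        intro x hx
        rcases Bool.eq_false_or_eq_true (code x m) with h | h
        · exact Or.inl ⟨hx, h⟩
        · exact Or.inr ⟨hx, h⟩
      have hTne : St.Nonempty ∧ Sf.Nonempty := by
        rcases hmem x0 hx0 with h | h <;> rcases hmem y0 hy0 with h' | h'
        · exact absurd (h.2.trans h'.2.symm) hne0
        · exact ⟨⟨x0, h⟩, ⟨y0, h'⟩⟩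
        · exact ⟨⟨y0, h'⟩, ⟨x0, h⟩⟩
        · exact absurd (h.2.trans h'.2.symm) hne0
      -- degree within the same half drops by at most one
      have hdeg' : ∀ (b : Bool) (Sb : Set V), (∀ z, z ∈ Sb ↔ z ∈ S ∧ code z m = b) →
          ∀ x ∈ Sb, g - 1 ≤ (G.neighborSet x ∩ Sb).ncard := by
        intro b Sb hSb x hxb'
        have hxb := (hSb x).1 hxb'
        have hcard : (G.neighborSet x ∩ S).ncard ≤ (G.neighborSet x ∩ Sb).ncard + 1 := by
          by_cases hex : ∃ y, y ∈ G.neighborSet x ∩ S ∧ code y m ≠ b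
          · obtain ⟨y, hy, hyb⟩ := hex
            have hsub : G.neighborSet x ∩ S ⊆ insert y (G.neighborSet x ∩ Sb) := by
              intro z hz
              by_cases hzb : code z m = b
              · exact Set.mem_insert_of_mem _ ⟨hz.1, (hSb z).2 ⟨hz.2, hzb⟩⟩
              · -- z and y are both cross-neighbors, hence equal
                have htz : TDiff (code x) (code z) m := by
                  constructor
                  · rw [hxb.2]
                    cases b <;> cases hb : code z m <;> simp_all
                  · intro j hj
                    exact hagr x hxb.1 z hz.2 hz.1 j hj
                have hty : TDiff (code x) (code y) m := by
                  constructor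
                  · rw [hxb.2]
                    cases b <;> cases hb : code y m <;> simp_all
                  · intro j hj
                    exact hagr x hxb.1 y hy.2 hy.1 j hj
                obtain ⟨k, hk, hdet⟩ := Hstr x y hy.1
                have hkm : k = m := TDiff_unique hk hty
                subst hkm
                exact Set.mem_insert_iff.2 (Or.inl (hdet z hz.1 htz))
            calc (G.neighborSet x ∩ S).ncard
                ≤ (insert y (G.neighborSet x ∩ Sb)).ncard :=
                  Set.ncard_le_ncard hsub (Set.toFinite _)
              _ ≤ (G.neighborSet x ∩ Sb).ncard + 1 := Set.ncard_insert_le _ _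
          · push_neg at hex
            have hsub : G.neighborSet x ∩ S ⊆ G.neighborSet x ∩ Sb := by
              intro z hz
              exact ⟨hz.1, (hSb z).2 ⟨hz.2, hex z hz⟩⟩
            exact le_trans (Set.ncard_le_ncard hsub (Set.toFinite _)) (Nat.le_succ _)
        have := hdeg x hxb.1
        omega
      -- agreement within each half
      have hagr' : ∀ (b : Bool) (Sb : Set V), (∀ z, z ∈ Sb ↔ z ∈ S ∧ code z m = b) →
          ∀ x ∈ Sb, ∀ y ∈ Sb, G.Adj x y → ∀ j, m ≤ j → code x j = code y j := by
        intro b Sb hSb x hx' y hy' hadj j hj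
        have hx := (hSb x).1 hx'
        have hy := (hSb y).1 hy'
        rcases Nat.eq_or_lt_of_le hj with he | hlt
        · rw [← he, hx.2, hy.2]
        · exact hagr x hx.1 y hy.1 hadj j hlt
      have hT : 2 ^ (g - 1) ≤ St.ncard :=
        ih (g - 1) St hTne.1 (hdeg' true St (fun z => Iff.rfl)) (hagr' true St (fun z => Iff.rfl))
      have hF : 2 ^ (g - 1) ≤ Sf.ncard :=
        ih (g - 1) Sf hTne.2 (hdeg' false Sf (fun z => Iff.rfl)) (hagr' false Sf (fun z => Iff.rfl))
      have hunion : S = St ∪ Sf := by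
        ext x
        constructor
        · intro hx; exact hmem x hx
        · rintro (hx | hx) <;> exact hx.1
      have hdisj : Disjoint St Sf := by
        rw [Set.disjoint_left]
        rintro a ⟨_, ha⟩ ⟨_, ha'⟩
        rw [ha] at ha'
        simp at ha'
      have hcardS : S.ncard = St.ncard + Sf.ncard := by
        rw [hunion]
        exact Set.ncard_union_eq hdisj (Set.toFinite _) (Set.toFinite _)
      have key : 2 ^ g ≤ 2 ^ (g - 1) + 2 ^ (g - 1) := by
        rcases Nat.eq_zero_or_pos g with rfl | hg
        · simp
        · have h3 : g - 1 + 1 = g := by omega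
          have h2 : 2 ^ g = 2 ^ (g - 1) * 2 := by rw [← pow_succ, h3]
          omega
      omega

/-- A subgraph of LeTQ(s,t) of minimum degree at least g has at least 2^g vertices. -/
theorem stmt6 (s t g : ℕ) (hs : 1 ≤ s) (ht : 1 ≤ t) (S : Set (LeTQVert s t))
    (hne : S.Nonempty)
    (hdeg : ∀ v ∈ S, g ≤ ((LeTQ s t).neighborSet v ∩ S).ncard) :
    2 ^ g ≤ S.ncard := by
  refine abstract_bound (LeTQ s t) ecode (fun u v h => adj_struct h) (s + t + 1) g S hne hdeg ?_
  intro x _ y _ _ j hj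
  rw [ecode_high x j (by omega), ecode_high y j (by omega)]
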